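/- Let d ≥ 1 and k ≥ 1, let ℱ be a finite family of non-empty finite sets each of cardinality at most d, and let ℱ' ⊆ ℱ. Suppose (i) for every finite set C with |C| ≤ d, the number of sets F ∈ ℱ' with C ⊆ F is at most (d(k−1)+1)^{d−|C|}, and (ii) for every F ∈ ℱ \ ℱ' there exists C ⊆ F such that the number of sets F' ∈ ℱ' with C ⊆ F' is at least (d(k−1)+1)^{d−|C|}. Then ℱ contains a k-packing if and only if ℱ' contains a k-packing. -/

import Mathlib

/-- **Correctness of the d-Set Packing kernelization.** Let `ℱ` be a finite family of
non-empty sets each of cardinality at most `d` and let `ℱ' ⊆ ℱ`. Suppose (i) for every set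
`C` with `|C| ≤ d`, `ℱ'` has at most `(d(k-1)+1)^(d-|C|)` supersets of `C`, and (ii) every
discarded set `F ∈ ℱ \ ℱ'` has a subset `C` with at least `(d(k-1)+1)^(d-|C|)` supersets
in `ℱ'`. Then `ℱ` contains `k` pairwise disjoint sets iff `ℱ'` does. -/
theorem setPacking_kernel_correct {α : Type*} [DecidableEq α] (d k : ℕ)
    (hd : 1 ≤ d) (hk : 1 ≤ k)
    (ℱ ℱ' : Finset (Finset α)) (hsub : ℱ' ⊆ ℱ)
    (hne : ∀ F ∈ ℱ, F.Nonempty) (hcard : ∀ F ∈ ℱ, F.card ≤ d)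
    (hinv : ∀ C : Finset α, C.card ≤ d →
      (ℱ'.filter fun F => C ⊆ F).card ≤ (d * (k - 1) + 1) ^ (d - C.card))
    (hdisc : ∀ F ∈ ℱ, F ∉ ℱ' → ∃ C ⊆ F,
      (d * (k - 1) + 1) ^ (d - C.card) ≤ (ℱ'.filter fun F' => C ⊆ F').card) :
    (∃ P ⊆ ℱ, P.card = k ∧ ∀ A ∈ P, ∀ B ∈ P, A ≠ B → Disjoint A B) ↔
    (∃ P ⊆ ℱ', P.card = k ∧ ∀ A ∈ P, ∀ B ∈ P, A ≠ B → Disjoint A B) := by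
  constructor
  · rintro ⟨P, hPsub, hPcard, hPdisj⟩
    -- key induction: if a packing has at most n members outside ℱ', we can fix it
    have key : ∀ n : ℕ, ∀ P : Finset (Finset α), P ⊆ ℱ → (P \ ℱ').card ≤ n →
        P.card = k → (∀ A ∈ P, ∀ B ∈ P, A ≠ B → Disjoint A B) →
        ∃ Q ⊆ ℱ', Q.card = k ∧ ∀ A ∈ Q, ∀ B ∈ Q, A ≠ B → Disjoint A B := by
      intro n
      induction n with
      | zero =>
        intro P hPsub hPn hPcard hPdisj
        refine ⟨P, ?_, hPcard, hPdisj⟩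
        intro A hA
        by_contra hA'
        have : A ∈ P \ ℱ' := Finset.mem_sdiff.mpr ⟨hA, hA'⟩
        have := Finset.card_pos.mpr ⟨A, this⟩
        omega
      | succ n ih =>
        intro P hPsub hPn hPcard hPdisj
        rcases Finset.eq_empty_or_nonempty (P \ ℱ') with hemp | ⟨F, hF⟩
        · exact ih P hPsub (by simp [hemp]) hPcard hPdisj
        obtain ⟨hFP, hFnot⟩ := Finset.mem_sdiff.mp hF
        obtain ⟨C, hCF, hCcount⟩ := hdisc F (hPsub hFP) hFnot
        set M := d * (k - 1) + 1 with hM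
        set W : Finset α := (P.erase F).biUnion id with hW
        -- F is disjoint from W
        have hFW : Disjoint F W := by
          rw [hW, Finset.disjoint_biUnion_right]
          intro B hB
          exact hPdisj F hFP B (Finset.mem_of_mem_erase hB)
            (Ne.symm (Finset.ne_of_mem_erase hB))
        have hCd : C.card ≤ d := le_trans (Finset.card_le_card hCF) (hcard F (hPsub hFP))
        -- bound on |W|
        have hWcard : W.card ≤ d * (k - 1) := by
          calc W.card ≤ ∑ B ∈ P.erase F, (id B).card := Finset.card_biUnion_le
            _ ≤ ∑ _B ∈ P.erase F, d := by
                refine Finset.sum_le_sum fun B hB => hcard B (hPsub (Finset.mem_of_mem_erase hB))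
            _ = (P.erase F).card * d := by rw [Finset.sum_const, smul_eq_mul]
            _ = (k - 1) * d := by rw [Finset.card_erase_of_mem hFP, hPcard]
            _ = d * (k - 1) := Nat.mul_comm _ _
        -- find a replacement F' ∈ ℱ' containing C and disjoint from W
        have hrepl : ∃ F' ∈ ℱ'.filter fun F' => C ⊆ F', Disjoint F' W := by
          by_contra hcon
          push_neg at hcon
          have hsub2 : (ℱ'.filter fun F' => C ⊆ F') ⊆
              W.biUnion (fun x => ℱ'.filter fun F' => insert x C ⊆ F') := by
            intro F' hF'
            obtain ⟨x, hxF', hxW⟩ := Finset.not_disjoint_iff.mp (hcon F' hF')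
            refine Finset.mem_biUnion.mpr ⟨x, hxW, ?_⟩
            rw [Finset.mem_filter] at hF' ⊢
            exact ⟨hF'.1, Finset.insert_subset hxF' hF'.2⟩
          have hxC : ∀ x ∈ W, x ∉ C := fun x hxW hxC =>
            Finset.disjoint_left.mp hFW (hCF hxC) hxW
          rcases lt_or_eq_of_le hCd with hlt | heq
          · -- |C| < d
            have hterm : ∀ x ∈ W,
                (ℱ'.filter fun F' => insert x C ⊆ F').card ≤ M ^ (d - C.card - 1) := by
              intro x hxW
              have hcx : (insert x C).card = C.card + 1 :=
                Finset.card_insert_of_notMem (hxC x hxW)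
              have := hinv (insert x C) (by omega)
              rwa [hcx, Nat.sub_add_eq] at this
            have hbad : (ℱ'.filter fun F' => C ⊆ F').card ≤ d * (k - 1) * M ^ (d - C.card - 1) := by
              calc (ℱ'.filter fun F' => C ⊆ F').card
                  ≤ (W.biUnion (fun x => ℱ'.filter fun F' => insert x C ⊆ F')).card :=
                    Finset.card_le_card hsub2
                _ ≤ ∑ x ∈ W, (ℱ'.filter fun F' => insert x C ⊆ F').card :=
                    Finset.card_biUnion_le
                _ ≤ ∑ _x ∈ W, M ^ (d - C.card - 1) := Finset.sum_le_sum hterm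
                _ = W.card * M ^ (d - C.card - 1) := by rw [Finset.sum_const, smul_eq_mul]
                _ ≤ d * (k - 1) * M ^ (d - C.card - 1) :=
                    Nat.mul_le_mul_right _ hWcard
            have hpow : M ^ (d - C.card) = M ^ (d - C.card - 1) * M := by
              rw [← pow_succ]
              congr 1
              omega
            have hppos : 0 < M ^ (d - C.card - 1) := Nat.pow_pos (by omega)
            have : d * (k - 1) * M ^ (d - C.card - 1) < M ^ (d - C.card) := by
              rw [hpow, Nat.mul_comm (d * (k-1))]
              exact Nat.mul_lt_mul_of_pos_left (by omega) hppos
            omega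
          · -- |C| = d : no set in ℱ' can contain insert x C
            have hempty : ∀ x ∈ W, (ℱ'.filter fun F' => insert x C ⊆ F') = ∅ := by
              intro x hxW
              rw [Finset.filter_eq_empty_iff]
              intro F' hF' hins
              have h1 : (insert x C).card = d + 1 := by
                rw [Finset.card_insert_of_notMem (hxC x hxW), heq]
              have h2 := Finset.card_le_card hins
              have h3 := hcard F' (hsub hF')
              omega
            have hz : (ℱ'.filter fun F' => C ⊆ F').card = 0 := by
              have h1 : (ℱ'.filter fun F' => C ⊆ F').card ≤
                  ∑ x ∈ W, (ℱ'.filter fun F' => insert x C ⊆ F').card :=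
                le_trans (Finset.card_le_card hsub2) Finset.card_biUnion_le
              have h2 : ∑ x ∈ W, (ℱ'.filter fun F' => insert x C ⊆ F').card = 0 :=
                Finset.sum_eq_zero fun x hx => by rw [hempty x hx]; simp
              omega
            have hpos : 0 < M ^ (d - C.card) := Nat.pow_pos (by omega)
            omega
        obtain ⟨F', hF'mem, hF'W⟩ := hrepl
        rw [Finset.mem_filter] at hF'mem
        obtain ⟨hF'ℱ', hCF'⟩ := hF'mem
        have hF'ne : F'.Nonempty := hne F' (hsub hF'ℱ')
        have hF'notin : F' ∉ P.erase F := by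
          intro h
          have hsubW : F' ⊆ W := Finset.subset_biUnion_of_mem id h
          obtain ⟨a, ha⟩ := hF'ne
          exact Finset.disjoint_left.mp hF'W ha (hsubW ha)
        set P' : Finset (Finset α) := insert F' (P.erase F) with hP'
        have hP'sub : P' ⊆ ℱ :=
          Finset.insert_subset (hsub hF'ℱ')
            (fun B hB => hPsub (Finset.mem_of_mem_erase hB))
        have hP'card : P'.card = k := by
          rw [hP', Finset.card_insert_of_notMem hF'notin, Finset.card_erase_of_mem hFP,
            hPcard]
          omega
        have hP'disj : ∀ A ∈ P', ∀ B ∈ P', A ≠ B → Disjoint A B := by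
          intro A hA B hB hAB
          rw [hP', Finset.mem_insert] at hA hB
          rcases hA with rfl | hA
          · rcases hB with rfl | hB
            · exact absurd rfl hAB
            · exact hF'W.mono_right (Finset.subset_biUnion_of_mem id hB)
          · rcases hB with rfl | hB
            · exact (hF'W.mono_right (Finset.subset_biUnion_of_mem id hA)).symm
            · exact hPdisj A (Finset.mem_of_mem_erase hA) B (Finset.mem_of_mem_erase hB) hAB
        have hdec : (P' \ ℱ').card ≤ n := by
          have hsub3 : P' \ ℱ' ⊆ (P \ ℱ').erase F := by
            intro A hA
            rw [Finset.mem_sdiff, hP', Finset.mem_insert] at hA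
            obtain ⟨hA1, hA2⟩ := hA
            rcases hA1 with rfl | hA1
            · exact absurd hF'ℱ' hA2
            · refine Finset.mem_erase.mpr ⟨Finset.ne_of_mem_erase hA1, ?_⟩
              exact Finset.mem_sdiff.mpr ⟨Finset.mem_of_mem_erase hA1, hA2⟩
          have := Finset.card_le_card hsub3
          rw [Finset.card_erase_of_mem hF] at this
          have hpos := Finset.card_pos.mpr ⟨F, hF⟩
          omega
        exact ih P' hP'sub hdec hP'card hP'disj
    exact key (P \ ℱ').card P hPsub (le_refl _) hPcard hPdisj
  · rintro ⟨P, hPsub, hPcard, hPdisj⟩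
    exact ⟨P, hPsub.trans hsub, hPcard, hPdisj⟩
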